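/- An atomic integral domain that contains a nonzero nonunit comparable element is a discrete valuation ring (DVR). Moreover, the maximal ideal is generated by a prime element h which is an irreducible factor of the comparable element, and every nonzero nonunit of D has the form (unit)·h^n for some n ≥ 1. -/

import Mathlib

open scoped nonZeroDivisors

/-- A nonzero element `c` of a domain `D` is comparable if for every `x ∈ D`,
either `cD ⊆ xD` or `xD ⊆ cD`. -/
def IsComparable {D : Type*} [CommRing D] (c : D) : Prop :=
  c ≠ 0 ∧ ∀ x : D, Ideal.span {c} ≤ Ideal.span {x} ∨ Ideal.span {x} ≤ Ideal.span {c}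

private lemma assoc_pow_prod {D : Type*} [CommMonoid D] (h : D) (l : Multiset D)
    (hl : ∀ b ∈ l, Associated h b) : Associated (h ^ Multiset.card l) l.prod := by
  induction l using Multiset.induction with
  | empty => simp
  | cons a s ih =>
    rw [Multiset.card_cons, Multiset.prod_cons, pow_succ']
    exact (hl a (Multiset.mem_cons_self a s)).mul_mul
      (ih fun b hb => hl b (Multiset.mem_cons_of_mem hb))

/-- An atomic integral domain containing a nonzero nonunit comparable element `c` is a
DVR; moreover its maximal ideal is generated by a prime (irreducible) factor `h` of
`c`, and every nonzero nonunit of `D` is of the form `u * h ^ n` with `u` a unit and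
`n ≥ 1`. -/
theorem dvr_of_atomic_with_comparable (D : Type*) [CommRing D] [IsDomain D]
    (hatomic : ∀ a : D, a ≠ 0 → ¬ IsUnit a →
      ∃ l : Multiset D, (∀ b ∈ l, Irreducible b) ∧ l.prod = a)
    (c : D) (hc : IsComparable c) (hcu : ¬ IsUnit c) :
    IsDiscreteValuationRing D ∧
      ∃ h : D, Irreducible h ∧ Prime h ∧ h ∣ c ∧ (Ideal.span {h}).IsMaximal ∧
        ∀ a : D, a ≠ 0 → ¬ IsUnit a →
          ∃ (u : Dˣ) (n : ℕ), 1 ≤ n ∧ a = (u : D) * h ^ n := by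
  obtain ⟨hc0, hcomp⟩ := hc
  have comp : ∀ x : D, x ∣ c ∨ c ∣ x := by
    intro x
    rcases hcomp x with h | h
    · exact Or.inl (Ideal.span_singleton_le_span_singleton.mp h)
    · exact Or.inr (Ideal.span_singleton_le_span_singleton.mp h)
  obtain ⟨l, hl, hprod⟩ := hatomic c hc0 hcu
  have hlne : l ≠ 0 := by
    rintro rfl
    rw [Multiset.prod_zero] at hprod
    exact hcu (hprod ▸ isUnit_one)
  obtain ⟨h, hmem⟩ := Multiset.exists_mem_of_ne_zero hlne
  have hirr : Irreducible h := hl h hmem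
  have hdvd : h ∣ c := hprod ▸ Multiset.dvd_prod hmem
  obtain ⟨m, hm⟩ := hdvd
  have hm0 : m ≠ 0 := by rintro rfl; rw [mul_zero] at hm; exact hc0 hm
  -- h is comparable (in divisibility form)
  have compH : ∀ x : D, x ∣ h ∨ h ∣ x := by
    intro x
    rcases comp (x * m) with hd | hd
    · left
      obtain ⟨k, hk⟩ := hd
      refine ⟨k, mul_right_cancel₀ hm0 ?_⟩
      rw [← hm, hk]; ring
    · right
      obtain ⟨k, hk⟩ := hd
      refine ⟨k, mul_right_cancel₀ hm0 ?_⟩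
      rw [hm] at hk
      rw [hk]; ring
  -- every nonzero nonunit is divisible by h
  have key : ∀ x : D, x ≠ 0 → ¬ IsUnit x → h ∣ x := by
    intro x hx0 hxu
    rcases compH x with hd | hd
    · obtain ⟨b, hb⟩ := hd
      rcases hirr.isUnit_or_isUnit hb with hu | hu
      · exact absurd hu hxu
      · obtain ⟨v, rfl⟩ := hu
        exact ⟨(v⁻¹ : Dˣ), by rw [hb, mul_assoc, Units.mul_inv, mul_one]⟩
    · exact hd
  -- every irreducible is associated to h
  have assoc : ∀ q : D, Irreducible q → Associated h q := by
    intro q hq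
    rcases compH q with hd | hd
    · obtain ⟨b, hb⟩ := hd
      rcases hirr.isUnit_or_isUnit hb with hu | hu
      · exact absurd hu hq.not_isUnit
      · exact Associated.symm (⟨hu.unit, by rw [IsUnit.unit_spec]; exact hb.symm⟩ :
          Associated q h)
    · obtain ⟨b, hb⟩ := hd
      rcases hq.isUnit_or_isUnit hb with hu | hu
      · exact absurd hu hirr.not_isUnit
      · exact ⟨hu.unit, by rw [IsUnit.unit_spec]; exact hb.symm⟩
  have hprime : Prime h := by
    refine ⟨hirr.ne_zero, hirr.not_isUnit, fun a b hab => ?_⟩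
    by_contra hcon
    push_neg at hcon
    obtain ⟨ha, hb⟩ := hcon
    have ha0 : a ≠ 0 := fun h0 => ha (h0 ▸ dvd_zero h)
    have hb0 : b ≠ 0 := fun h0 => hb (h0 ▸ dvd_zero h)
    have hau : IsUnit a := by
      by_contra hh; exact ha (key a ha0 hh)
    have hbu : IsUnit b := by
      by_contra hh; exact hb (key b hb0 hh)
    exact hirr.not_isUnit (isUnit_of_dvd_unit hab (hau.mul hbu))
  -- form of nonzero nonunits
  have form : ∀ a : D, a ≠ 0 → ¬ IsUnit a →
      ∃ (u : Dˣ) (n : ℕ), 1 ≤ n ∧ a = (u : D) * h ^ n := by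
    intro a ha0 hau
    obtain ⟨la, hla, hlaprod⟩ := hatomic a ha0 hau
    have hlane : la ≠ 0 := by
      rintro rfl
      rw [Multiset.prod_zero] at hlaprod
      exact hau (hlaprod ▸ isUnit_one)
    have hassoc : Associated (h ^ Multiset.card la) a :=
      hlaprod ▸ assoc_pow_prod h la fun b hb => assoc b (hla b hb)
    obtain ⟨u, hu⟩ := hassoc
    refine ⟨u, Multiset.card la, ?_, by rw [← hu]; ring⟩
    rwa [Nat.one_le_iff_ne_zero, Ne, Multiset.card_eq_zero]
  -- DVR
  have hdvr : IsDiscreteValuationRing D := by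
    apply IsDiscreteValuationRing.ofHasUnitMulPowIrreducibleFactorization
    refine ⟨h, hirr, ?_⟩
    intro x hx0
    by_cases hxu : IsUnit x
    · exact ⟨0, by simpa using (associated_one_iff_isUnit.mpr hxu).symm⟩
    · obtain ⟨u, n, _, rfl⟩ := form x hx0 hxu
      exact ⟨n, ⟨u, by ring⟩⟩
  refine ⟨hdvr, h, hirr, hprime, ⟨m, hm⟩, ?_, form⟩
  rw [Ideal.isMaximal_iff]
  constructor
  · intro h1
    rw [Ideal.mem_span_singleton] at h1
    exact hirr.not_isUnit (isUnit_of_dvd_one h1)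
  · intro J x _ hxI hxJ
    rw [Ideal.mem_span_singleton] at hxI
    have hx0 : x ≠ 0 := fun h0 => hxI (h0 ▸ dvd_zero h)
    have hxu : IsUnit x := by
      by_contra hh; exact hxI (key x hx0 hh)
    obtain ⟨v, rfl⟩ := hxu
    have : ((v⁻¹ : Dˣ) : D) * v ∈ J := J.mul_mem_left _ hxJ
    simpa using this
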